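/- Fix nonnegative integers a,b,c with a ≤ c ≤ 2a. Define m(x,y) for nonnegative integers x,y as the number of triples (d,e,f) of integers with 0≤d≤2a-c, 0≤e≤b, 0≤f, satisfying d-e+f = x-b and e+f = y. Then m(x,y) ≠ 0 if and only if: -2a-b+c ≤ -x+y ≤ b, x+y ≥ b, and (if 2a=c) x+y ≡ b (mod 2). Moreover when m(x,y)≠0, setting δ = 0 if x+y ≡ b (mod 2) and δ = 1 otherwise: if y ≥ b then m(x,y) = min(⌊(2a-c-δ)/2⌋, (b+x-y-δ)/2, ⌊(2a+b-c-x+y)/2⌋, b) + 1, and if y < b then m(x,y) = min(⌊(2a-c-δ)/2⌋, (-b+x+y-δ)/2, ⌊(2a+b-c-x+y)/2⌋, y) + 1. -/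
import Mathlib

/-- `mcount a b c x y` is the number of integer triples `(d,e,f)` with
`0 ≤ d ≤ 2a−c`, `0 ≤ e ≤ b`, `0 ≤ f`, `d − e + f = x − b`, `e + f = y`. -/
noncomputable def mcount (a b c x y : ℕ) : ℕ :=
  Set.ncard {t : ℤ × ℤ × ℤ |
    0 ≤ t.1 ∧ t.1 ≤ 2 * (a : ℤ) - c ∧ 0 ≤ t.2.1 ∧ t.2.1 ≤ (b : ℤ) ∧ 0 ≤ t.2.2 ∧
    t.1 - t.2.1 + t.2.2 = (x : ℤ) - b ∧ t.2.1 + t.2.2 = (y : ℤ)}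

lemma mcount_eq (a b c x y : ℕ) :
    mcount a b c x y =
      (min (min (b:ℤ) (y:ℤ)) ((2*(a:ℤ) - c + b + y - x)/2) + 1
        - max 0 (((b:ℤ) + y - x + 1)/2)).toNat := by
  have hset : {t : ℤ × ℤ × ℤ |
      0 ≤ t.1 ∧ t.1 ≤ 2 * (a : ℤ) - c ∧ 0 ≤ t.2.1 ∧ t.2.1 ≤ (b : ℤ) ∧ 0 ≤ t.2.2 ∧
      t.1 - t.2.1 + t.2.2 = (x : ℤ) - b ∧ t.2.1 + t.2.2 = (y : ℤ)} =
      ↑((Finset.Icc (max 0 (((b:ℤ) + y - x + 1)/2))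
          (min (min (b:ℤ) (y:ℤ)) ((2*(a:ℤ) - c + b + y - x)/2))).image
        (fun e : ℤ => ((x:ℤ) - b + 2*e - y, e, (y:ℤ) - e))) := by
    ext ⟨d, e, f⟩
    simp only [Set.mem_setOf_eq, Finset.coe_image, Set.mem_image, Finset.mem_coe,
      Finset.mem_Icc, Prod.mk.injEq]
    constructor
    · rintro ⟨hd0, hd1, he0, he1, hf0, hq1, hq2⟩
      exact ⟨e, by omega, by omega, rfl, by omega⟩
    · rintro ⟨e', ⟨hlo, hhi⟩, h1, rfl, h3⟩
      omega
  rw [mcount, hset, Set.ncard_coe_finset,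
    Finset.card_image_of_injective _ (fun e₁ e₂ h => by simpa using congrArg (·.2.1) h),
    Int.card_Icc]

/-- Nonvanishing criterion and closed formula for `mcount` in the regime `a ≤ c ≤ 2a`. -/
theorem mcount_formula_a_le_c (a b c x y : ℕ) (h1 : a ≤ c) (h2 : c ≤ 2 * a) :
    (mcount a b c x y ≠ 0 ↔
      (-(2 * (a : ℤ)) - b + c ≤ -(x : ℤ) + y ∧ -(x : ℤ) + y ≤ (b : ℤ) ∧
        (b : ℤ) ≤ (x : ℤ) + y ∧ (2 * a = c → ((x : ℤ) + y) % 2 = (b : ℤ) % 2))) ∧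
    (mcount a b c x y ≠ 0 →
      ∀ δ : ℤ, (δ = if ((x : ℤ) + y) % 2 = (b : ℤ) % 2 then 0 else 1) →
      ((b ≤ y → (mcount a b c x y : ℤ) =
          min (min ((2 * (a : ℤ) - c - δ) / 2) (((b : ℤ) + x - y - δ) / 2))
            (min ((2 * (a : ℤ) + b - c - x + y) / 2) (b : ℤ)) + 1) ∧
       (y < b → (mcount a b c x y : ℤ) =
          min (min ((2 * (a : ℤ) - c - δ) / 2) ((-(b : ℤ) + x + y - δ) / 2))
            (min ((2 * (a : ℤ) + b - c - x + y) / 2) (y : ℤ)) + 1))) := by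
  have key := mcount_eq a b c x y
  constructor
  · rw [key]; omega
  · intro hne δ hδ
    rw [key] at hne ⊢
    split_ifs at hδ with hpar
    · subst hδ; constructor <;> intro hy <;> omega
    · subst hδ; constructor <;> intro hy <;> omega
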